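/- For the embedding f(x) = ((1−x²)/(1+x²), 2x/(1+x²)) into ℝ², the Euclidean distance satisfies ‖f(x) − f(y)‖ = 2·|x−y|/(√(x²+1)·√(y²+1)) for all x, y ∈ ℝ. -/

import Mathlib

/-- The stereographic-type embedding of ℝ into the Euclidean plane. -/
noncomputable def circleEmbed (x : ℝ) : EuclideanSpace ℝ (Fin 2) :=
  WithLp.toLp 2 ![(1 - x ^ 2) / (1 + x ^ 2), 2 * x / (1 + x ^ 2)]

/-- The Euclidean distance between embedded points equals twice the algebraic distance. -/
theorem circleEmbed_dist (x y : ℝ) :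
    ‖circleEmbed x - circleEmbed y‖ =
      2 * |x - y| / (Real.sqrt (x ^ 2 + 1) * Real.sqrt (y ^ 2 + 1)) := by
  have hx : (0:ℝ) < 1 + x ^ 2 := by positivity
  have hy : (0:ℝ) < 1 + y ^ 2 := by positivity
  have key : ‖circleEmbed x - circleEmbed y‖ =
      Real.sqrt (4 * (x - y) ^ 2 / ((x ^ 2 + 1) * (y ^ 2 + 1))) := by
    rw [EuclideanSpace.norm_eq]
    congr 1
    simp only [circleEmbed, Fin.sum_univ_two, PiLp.sub_apply, PiLp.toLp_apply, Matrix.cons_val_zero,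
      Matrix.cons_val_one, Matrix.head_cons, Real.norm_eq_abs, sq_abs]
    field_simp
    ring
  rw [key, Real.sqrt_div' _ (by positivity), Real.sqrt_mul (by positivity)]
  rw [Real.sqrt_sq_eq_abs, Real.sqrt_mul (by positivity), show (4:ℝ) = 2 ^ 2 by norm_num,
    Real.sqrt_sq (by norm_num)]
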